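/- Let B : [0,∞) → ℝ be measurable with s ↦ B(s)² s integrable on (0, R) for every R > 0, and let Φ(r) = ∫₀^r B(s) s ds. Then for every R > 0, ∫_{|x| ≤ R} (Φ(|x|)/|x|)² dx ≤ (π/2) · ∫₀^R B(s)² (R² − s²) s ds. -/

import Mathlib

open MeasureTheory

private lemma cs_flux (B : ℝ → ℝ) (hB : Measurable B) {r : ℝ} (hr : 0 < r)
    (hint : IntegrableOn (fun s => B s ^ 2 * s) (Set.Ioo 0 r)) :
    ((∫ s in Set.Ioo (0 : ℝ) r, B s * s) / r) ^ 2
      ≤ (1 / 2) * ∫ s in Set.Ioo (0 : ℝ) r, B s ^ 2 * s := by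
  set μr := volume.restrict (Set.Ioo (0 : ℝ) r) with hμr
  have hae : ∀ᵐ s ∂μr, s ∈ Set.Ioo (0 : ℝ) r := ae_restrict_mem measurableSet_Ioo
  set f : ℝ → ℝ := fun s => |B s| * Real.sqrt s with hf
  set h : ℝ → ℝ := fun s => Real.sqrt s with hh
  have hfm : AEStronglyMeasurable f μr :=
    (hB.abs.mul Real.continuous_sqrt.measurable).aestronglyMeasurable
  have hhm : AEStronglyMeasurable h μr := Real.continuous_sqrt.measurable.aestronglyMeasurable
  have hf2 : ∀ᵐ s ∂μr, B s ^ 2 * s = f s ^ 2 := by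
    filter_upwards [hae] with s hs
    rw [hf]; simp only [mul_pow, sq_abs, Real.sq_sqrt hs.1.le]
  have hh2 : ∀ᵐ s ∂μr, s = h s ^ 2 := by
    filter_upwards [hae] with s hs
    rw [hh]; simp [Real.sq_sqrt hs.1.le]
  have hid : Integrable (fun s => s) μr := by
    have : IntegrableOn (fun s : ℝ => s) (Set.Ioc 0 r) := continuous_id.integrableOn_Ioc
    exact this.mono_set Set.Ioo_subset_Ioc_self
  have hfint : Integrable (fun s => f s ^ 2) μr := hint.congr hf2
  have hhint : Integrable (fun s => h s ^ 2) μr := hid.congr hh2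
  have hmemf : MemLp f (ENNReal.ofReal 2) μr := by
    rw [show ENNReal.ofReal 2 = 2 by norm_num]
    exact (memLp_two_iff_integrable_sq hfm).2 hfint
  have hmemh : MemLp h (ENNReal.ofReal 2) μr := by
    rw [show ENNReal.ofReal 2 = 2 by norm_num]
    exact (memLp_two_iff_integrable_sq hhm).2 hhint
  have hconj : Real.HolderConjugate 2 2 := Real.HolderConjugate.two_two
  have key := integral_mul_le_Lp_mul_Lq_of_nonneg hconj
    (Filter.Eventually.of_forall fun s => mul_nonneg (abs_nonneg _) (Real.sqrt_nonneg _))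
    (Filter.Eventually.of_forall fun s => Real.sqrt_nonneg _) hmemf hmemh
  have hcast : ∀ u : ℝ → ℝ, (∫ s, u s ^ (2:ℝ) ∂μr) = ∫ s, u s ^ 2 ∂μr := fun u => by
    simp only [show (2:ℝ) = ((2:ℕ):ℝ) by norm_num, Real.rpow_natCast]
  rw [hcast f, hcast h] at key
  -- |∫ B s * s| ≤ ∫ f * h
  have habs : |∫ s in Set.Ioo (0 : ℝ) r, B s * s| ≤ ∫ s, f s * h s ∂μr := by
    have h0 := norm_integral_le_integral_norm (μ := μr) (fun s => B s * s)
    simp only [Real.norm_eq_abs] at h0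
    refine h0.trans_eq (integral_congr_ae ?_)
    filter_upwards [hae] with s hs
    rw [abs_mul, abs_of_nonneg hs.1.le, hf, hh]
    rw [mul_assoc, Real.mul_self_sqrt hs.1.le]
  have hfh0 : (0 : ℝ) ≤ ∫ s, f s * h s ∂μr :=
    integral_nonneg fun s => mul_nonneg (mul_nonneg (abs_nonneg _) (Real.sqrt_nonneg _))
      (Real.sqrt_nonneg _)
  have hA0 : (0 : ℝ) ≤ ∫ s, f s ^ 2 ∂μr := integral_nonneg fun s => sq_nonneg _
  have hB0 : (0 : ℝ) ≤ ∫ s, h s ^ 2 ∂μr := integral_nonneg fun s => sq_nonneg _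
  have hsq : (∫ s in Set.Ioo (0 : ℝ) r, B s * s) ^ 2
      ≤ (∫ s, f s ^ 2 ∂μr) * (∫ s, h s ^ 2 ∂μr) := by
    have h1 : (∫ s in Set.Ioo (0 : ℝ) r, B s * s) ^ 2 ≤ (∫ s, f s * h s ∂μr) ^ 2 := by
      rw [← sq_abs]
      exact pow_le_pow_left₀ (abs_nonneg _) habs 2
    refine h1.trans ?_
    calc (∫ s, f s * h s ∂μr) ^ 2
        ≤ ((∫ s, f s ^ 2 ∂μr) ^ ((1:ℝ)/2) * (∫ s, h s ^ 2 ∂μr) ^ ((1:ℝ)/2)) ^ 2 :=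
          pow_le_pow_left₀ hfh0 key 2
      _ = (∫ s, f s ^ 2 ∂μr) * (∫ s, h s ^ 2 ∂μr) := by
          have e : ∀ a : ℝ, 0 ≤ a → (a ^ ((1:ℝ)/2)) ^ 2 = a := fun a ha => by
            rw [← Real.rpow_natCast (a ^ ((1:ℝ)/2)) 2, ← Real.rpow_mul ha]
            norm_num
          rw [mul_pow, e _ hA0, e _ hB0]
  have hI2 : ∫ s, h s ^ 2 ∂μr = r ^ 2 / 2 := by
    have : ∫ s, h s ^ 2 ∂μr = ∫ s in Set.Ioo (0 : ℝ) r, s := (integral_congr_ae hh2).symm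
    rw [this, ← integral_Ioc_eq_integral_Ioo, ← intervalIntegral.integral_of_le hr.le,
      integral_id]
    ring
  have hI1 : ∫ s, f s ^ 2 ∂μr = ∫ s in Set.Ioo (0 : ℝ) r, B s ^ 2 * s :=
    (integral_congr_ae hf2).symm
  rw [hI1, hI2] at hsq
  rw [div_pow]
  rw [div_le_iff₀ (by positivity : (0:ℝ) < r ^ 2)]
  calc (∫ s in Set.Ioo (0 : ℝ) r, B s * s) ^ 2
      ≤ (∫ s in Set.Ioo (0 : ℝ) r, B s ^ 2 * s) * (r ^ 2 / 2) := hsq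
    _ = 1 / 2 * (∫ s in Set.Ioo (0 : ℝ) r, B s ^ 2 * s) * r ^ 2 := by ring

private lemma fubini_flux (g : ℝ → ℝ) (hg : Measurable g) {R : ℝ} (hR : 0 < R)
    (hgint : IntegrableOn g (Set.Ioo 0 R)) :
    ∫ y in Set.Ioc (0 : ℝ) R, y * ∫ s in Set.Ioc (0 : ℝ) y, g s
      = ∫ s in Set.Ioo (0 : ℝ) R, g s * ((R ^ 2 - s ^ 2) / 2) := by
  set μ1 := volume.restrict (Set.Ioc (0 : ℝ) R)
  set μ2 := volume.restrict (Set.Ioo (0 : ℝ) R)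
  set K : ℝ → ℝ → ℝ := fun y s => if 0 < y ∧ y ≤ R ∧ s < y then y * g s else 0 with hK
  have hmeasK : Measurable (Function.uncurry K) := by
    have hs : MeasurableSet {p : ℝ × ℝ | 0 < p.1 ∧ p.1 ≤ R ∧ p.2 < p.1} := by
      refine (measurableSet_lt measurable_const measurable_fst).inter
        ((measurableSet_le measurable_fst measurable_const).inter
          (measurableSet_lt measurable_snd measurable_fst))
    exact Measurable.ite hs (measurable_fst.mul (hg.comp measurable_snd)) measurable_const
  have hKint : Integrable (Function.uncurry K) (μ1.prod μ2) := by
    have hdom : Integrable (fun p : ℝ × ℝ => R * ‖g p.2‖) (μ1.prod μ2) := by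
      exact Integrable.mul_prod (integrable_const (μ := volume.restrict (Set.Ioc (0:ℝ) R)) R) hgint.norm
    refine hdom.mono' hmeasK.aestronglyMeasurable ?_
    refine Filter.Eventually.of_forall fun p => ?_
    by_cases hp : 0 < p.1 ∧ p.1 ≤ R ∧ p.2 < p.1
    · simp only [Function.uncurry, hK, if_pos hp, norm_mul]
      refine mul_le_mul_of_nonneg_right ?_ (norm_nonneg _)
      rw [Real.norm_eq_abs, abs_of_pos hp.1]; exact hp.2.1
    · simp only [Function.uncurry, hK, if_neg hp, norm_zero]
      positivity
  have claimA : ∀ y ∈ Set.Ioc (0 : ℝ) R,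
      y * ∫ s in Set.Ioc (0 : ℝ) y, g s = ∫ s in Set.Ioo (0 : ℝ) R, K y s := by
    intro y hy
    have h1 : ∀ s, K y s = Set.indicator (Set.Iio y) (fun s => y * g s) s := by
      intro s
      rw [Set.indicator_apply]
      by_cases hs : s < y
      · rw [hK]; simp [hy.1, hy.2, hs]
      · rw [hK]; simp [hs]
    simp_rw [h1]
    rw [setIntegral_indicator measurableSet_Iio]
    have h2 : Set.Ioo (0 : ℝ) R ∩ Set.Iio y = Set.Ioo 0 y := by
      ext s
      simp only [Set.mem_inter_iff, Set.mem_Ioo, Set.mem_Iio]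
      exact ⟨fun ⟨⟨a, _⟩, c⟩ => ⟨a, c⟩, fun ⟨a, b⟩ => ⟨⟨a, b.trans_le hy.2⟩, b⟩⟩
    rw [h2, integral_const_mul, integral_Ioc_eq_integral_Ioo]
  have claimB : ∀ s ∈ Set.Ioo (0 : ℝ) R,
      (∫ y in Set.Ioc (0 : ℝ) R, K y s) = g s * ((R ^ 2 - s ^ 2) / 2) := by
    intro s hs
    have h1 : ∀ y, K y s = Set.indicator (Set.Ioc s R) (fun y => y * g s) y := by
      intro y
      rw [Set.indicator_apply]
      by_cases hy : s < y ∧ y ≤ R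
      · rw [hK]; simp [hy.1, hy.2, hs.1.trans hy.1, Set.mem_Ioc]
      · have hny : ¬(0 < y ∧ y ≤ R ∧ s < y) := fun ⟨_, h2, h3⟩ => hy ⟨h3, h2⟩
        simp only [Set.mem_Ioc, hK]
        rw [if_neg hny, if_neg hy]
    simp_rw [h1]
    rw [setIntegral_indicator measurableSet_Ioc]
    have h2 : Set.Ioc (0 : ℝ) R ∩ Set.Ioc s R = Set.Ioc s R := by
      rw [Set.Ioc_inter_Ioc, max_eq_right hs.1.le, min_self]
    rw [h2, integral_mul_const, ← intervalIntegral.integral_of_le hs.2.le,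
      integral_id, mul_comm]
  calc ∫ y in Set.Ioc (0 : ℝ) R, y * ∫ s in Set.Ioc (0 : ℝ) y, g s
      = ∫ y in Set.Ioc (0 : ℝ) R, ∫ s in Set.Ioo (0 : ℝ) R, K y s :=
        setIntegral_congr_fun measurableSet_Ioc claimA
    _ = ∫ s in Set.Ioo (0 : ℝ) R, ∫ y in Set.Ioc (0 : ℝ) R, K y s :=
        integral_integral_swap hKint
    _ = ∫ s in Set.Ioo (0 : ℝ) R, g s * ((R ^ 2 - s ^ 2) / 2) :=
        setIntegral_congr_fun measurableSet_Ioo claimB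

/-- Quantitative bound: if `s ↦ B(s)² s` is integrable on `(0,R)` for every `R > 0` and
`Φ(r) = ∫₀^r B(s) s ds`, then for every `R > 0` one has
`∫_{|x| ≤ R} (Φ(|x|)/|x|)² dx ≤ (π/2) ∫₀^R B(s)² (R² − s²) s ds`. -/
theorem flux_square_integral_bound (B : ℝ → ℝ) (hB : Measurable B)
    (hint : ∀ R > (0 : ℝ), IntegrableOn (fun s => B s ^ 2 * s) (Set.Ioo 0 R))
    (R : ℝ) (hR : 0 < R) :
    (∫ x : EuclideanSpace ℝ (Fin 2) in {x | ‖x‖ ≤ R},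
        ((∫ s in Set.Ioo (0 : ℝ) ‖x‖, B s * s) / ‖x‖) ^ 2)
      ≤ (Real.pi / 2) * ∫ s in Set.Ioo (0 : ℝ) R, B s ^ 2 * (R ^ 2 - s ^ 2) * s := by
  have hg_meas : Measurable fun s : ℝ => B s ^ 2 * s := (hB.pow_const 2).mul measurable_id
  have hgR : IntegrableOn (fun s => B s ^ 2 * s) (Set.Ioo 0 R) := hint R hR
  set G : ℝ → ℝ := fun y => (1 / 2) * ∫ t in Set.Ioc (0 : ℝ) y, B t ^ 2 * t with hGdef
  have hS : {x : EuclideanSpace ℝ (Fin 2) | ‖x‖ ≤ R} = Metric.closedBall 0 R := by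
    ext x
    simp [Metric.mem_closedBall, dist_zero_right]
  have hGc : ContinuousOn G (Set.Icc 0 R) := by
    have hIcc : IntegrableOn (fun s => B s ^ 2 * s) (Set.Icc 0 R) := by
      rw [integrableOn_Icc_iff_integrableOn_Ioo]
      exact hgR
    exact continuousOn_const.mul (intervalIntegral.continuousOn_primitive hIcc)
  have hGle : ∀ x ∈ Metric.closedBall (0 : EuclideanSpace ℝ (Fin 2)) R,
      ((∫ s in Set.Ioo (0 : ℝ) ‖x‖, B s * s) / ‖x‖) ^ 2 ≤ G ‖x‖ := by
    intro x hx
    rcases eq_or_lt_of_le (norm_nonneg x) with h0 | h0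
    · rw [← h0]
      simp [hGdef, Set.Ioc_self, Set.Ioo_self]
    · refine (cs_flux B hB h0 (hint ‖x‖ h0)).trans_eq ?_
      rw [hGdef]
      simp only [integral_Ioc_eq_integral_Ioo]
  have hGxint : IntegrableOn (fun x : EuclideanSpace ℝ (Fin 2) => G ‖x‖)
      (Metric.closedBall 0 R) := by
    refine ContinuousOn.integrableOn_compact (isCompact_closedBall 0 R) ?_
    exact hGc.comp continuous_norm.continuousOn fun x hx =>
      ⟨norm_nonneg x, mem_closedBall_zero_iff.1 hx⟩
  have step1 : (∫ x : EuclideanSpace ℝ (Fin 2) in {x | ‖x‖ ≤ R},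
        ((∫ s in Set.Ioo (0 : ℝ) ‖x‖, B s * s) / ‖x‖) ^ 2)
      ≤ ∫ x : EuclideanSpace ℝ (Fin 2) in Metric.closedBall 0 R, G ‖x‖ := by
    rw [hS]
    refine integral_mono_of_nonneg (Filter.Eventually.of_forall fun x => sq_nonneg _)
      hGxint ?_
    filter_upwards [ae_restrict_mem measurableSet_closedBall] with x hx using hGle x hx
  have hvol : (volume (Metric.ball (0 : EuclideanSpace ℝ (Fin 2)) 1)).toReal = Real.pi := by
    rw [EuclideanSpace.volume_ball]
    rw [Fintype.card_fin]
    have h2 : ((2 : ℕ) : ℝ) / 2 + 1 = 2 := by norm_num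
    rw [h2, Real.Gamma_two, Real.sq_sqrt Real.pi_pos.le]
    simp [ENNReal.toReal_ofReal Real.pi_pos.le]
  have step2 : (∫ x : EuclideanSpace ℝ (Fin 2) in Metric.closedBall 0 R, G ‖x‖)
      = 2 * Real.pi * ∫ y in Set.Ioc (0 : ℝ) R, y * G y := by
    have h1 : (∫ x : EuclideanSpace ℝ (Fin 2) in Metric.closedBall 0 R, G ‖x‖)
        = ∫ x : EuclideanSpace ℝ (Fin 2), Set.indicator (Set.Iic R) G ‖x‖ := by
      rw [← integral_indicator measurableSet_closedBall]
      refine integral_congr_ae (Filter.Eventually.of_forall fun x => ?_)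
      by_cases hx : ‖x‖ ≤ R
      · simp only [Set.indicator_of_mem (mem_closedBall_zero_iff.2 hx),
          Set.indicator_of_mem (Set.mem_Iic.2 hx)]
      · simp only [Set.indicator_of_notMem (fun h => hx (mem_closedBall_zero_iff.1 h)),
          Set.indicator_of_notMem (fun h => hx (Set.mem_Iic.1 h))]
    rw [h1, integral_fun_norm_addHaar volume (Set.indicator (Set.Iic R) G)]
    rw [finrank_euclideanSpace_fin, measureReal_def, hvol]
    have h3 : ∀ y : ℝ, y ^ (2 - 1) • Set.indicator (Set.Iic R) G y
        = Set.indicator (Set.Iic R) (fun y => y * G y) y := by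
      intro y
      simp only [show (2 - 1 : ℕ) = 1 from rfl, pow_one, smul_eq_mul]
      exact (Set.indicator_mul_right (Set.Iic R) (fun y : ℝ => y) G).symm
    simp_rw [h3]
    rw [setIntegral_indicator measurableSet_Iic, Set.Ioi_inter_Iic]
    rw [nsmul_eq_mul, smul_eq_mul]
    ring
  have step3 : 2 * Real.pi * (∫ y in Set.Ioc (0 : ℝ) R, y * G y)
      = (Real.pi / 2) * ∫ s in Set.Ioo (0 : ℝ) R, B s ^ 2 * (R ^ 2 - s ^ 2) * s := by
    have h4 : ∀ y : ℝ, y * G y = (1 / 2) * (y * ∫ t in Set.Ioc (0 : ℝ) y, B t ^ 2 * t) := by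
      intro y
      rw [hGdef]
      ring
    simp_rw [h4]
    rw [integral_const_mul, fubini_flux _ hg_meas hR hgR]
    have h5 : ∀ s : ℝ, B s ^ 2 * s * ((R ^ 2 - s ^ 2) / 2)
        = (1 / 2) * (B s ^ 2 * (R ^ 2 - s ^ 2) * s) := by
      intro s
      ring
    simp_rw [h5]
    rw [integral_const_mul]
    ring
  calc (∫ x : EuclideanSpace ℝ (Fin 2) in {x | ‖x‖ ≤ R},
        ((∫ s in Set.Ioo (0 : ℝ) ‖x‖, B s * s) / ‖x‖) ^ 2)
      ≤ ∫ x : EuclideanSpace ℝ (Fin 2) in Metric.closedBall 0 R, G ‖x‖ := step1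
    _ = 2 * Real.pi * ∫ y in Set.Ioc (0 : ℝ) R, y * G y := step2
    _ = (Real.pi / 2) * ∫ s in Set.Ioo (0 : ℝ) R, B s ^ 2 * (R ^ 2 - s ^ 2) * s := step3
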